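/- arXiv:2010.03198 — 2 statements merged into one kernel-verified Lean document; each statement's English description precedes it below -/
import Mathlib

section
/- Let a ∈ (ℤ/2)^d nonzero, y ∈ (ℤ/2)^r nonzero, n_1,…,n_d ≥ 3 with 4 | gcd(n_1,…,n_d). Let M_a = A_{K_{n_1}}^{a_1} ⊗ ⋯ ⊗ A_{K_{n_d}}^{a_d}, M_y = A_{K_2}^{y_1} ⊗ ⋯ ⊗ A_{K_2}^{y_r}, and B = M_a ⊗ M_y. Then exp(-i(π/2)B) = (-1)^{w(a)-1} · i · (I_{n_1⋯n_d} ⊗ M_y), where w(a) is the Hamming weight of a. In particular the graph NEPS(K_{n_1},…,K_{n_d}, K_2,…,K_2; {(a,y)}) exhibits perfect state transfer at time π/2. -/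
open Kronecker

/-- Adjacency matrix of the complete graph `K_n`, as a complex matrix. -/
noncomputable def Kadj (n : ℕ) : Matrix (Fin n) (Fin n) ℂ :=
  Matrix.of fun i j => if i = j then 0 else 1

/-- Adjacency matrix of `K_2`, indexed by `ZMod 2`. -/
noncomputable def A2 : Matrix (ZMod 2) (ZMod 2) ℂ :=
  Matrix.of fun i j => if i = j then 0 else 1

/-- Kronecker product of a family of matrices. -/
noncomputable def kronC {d : ℕ} {n : Fin d → ℕ}
    (M : ∀ i, Matrix (Fin (n i)) (Fin (n i)) ℂ) :
    Matrix (∀ i, Fin (n i)) (∀ i, Fin (n i)) ℂ :=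
  Matrix.of fun u v => ∏ i, M i (u i) (v i)

/-- `M_a = A_{K_2}^{a_1} ⊗ ⋯ ⊗ A_{K_2}^{a_r}` for `a ∈ (ℤ/2)^r`. -/
noncomputable def cube {r : ℕ} (a : Fin r → ZMod 2) :
    Matrix (Fin r → ZMod 2) (Fin r → ZMod 2) ℂ :=
  Matrix.of fun u v => ∏ j, (if a j = 1 then A2 else 1) (u j) (v j)

/-- `A_{K_{n_1}}^{a_1} ⊗ ⋯ ⊗ A_{K_{n_d}}^{a_d}`. -/
noncomputable def compKron {d : ℕ} (n : Fin d → ℕ) (a : Fin d → ZMod 2) :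
    Matrix (∀ i, Fin (n i)) (∀ i, Fin (n i)) ℂ :=
  kronC fun i => if a i = 1 then Kadj (n i) else 1

/-- Hamming weight. -/
def wt {m : ℕ} (a : Fin m → ZMod 2) : ℕ :=
  (Finset.univ.filter fun i => a i = 1).card

section AUX
open Finset
section BASE


section pk
variable {ι : Type*} [Fintype ι] {κ : ι → Type*} [∀ i, Fintype (κ i)] [∀ i, DecidableEq (κ i)]

noncomputable def pk (M : ∀ i, Matrix (κ i) (κ i) ℂ) : Matrix (∀ i, κ i) (∀ i, κ i) ℂ :=
  Matrix.of fun u v => ∏ i, M i (u i) (v i)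

variable [DecidableEq ι]

lemma pk_mul (M N : ∀ i, Matrix (κ i) (κ i) ℂ) :
    pk M * pk N = pk (fun i => M i * N i) := by
  ext u v
  simp only [pk, Matrix.mul_apply, Matrix.of_apply]
  rw [Fintype.prod_sum (fun i k => M i (u i) k * N i k (v i))]
  exact Finset.sum_congr rfl fun w _ => (Finset.prod_mul_distrib).symm

lemma pk_one : pk (fun i => (1 : Matrix (κ i) (κ i) ℂ)) = 1 := by
  ext u v
  simp only [pk, Matrix.of_apply, Matrix.one_apply]
  rw [Fintype.prod_boole]
  simp [funext_iff]
end pk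

lemma exp_smul_idem {𝔸 : Type*} [NormedRing 𝔸] [NormedAlgebra ℂ 𝔸] [CompleteSpace 𝔸]
    (A : 𝔸) (h : A * A = A) (c : ℂ) :
    NormedSpace.exp (c • A) = 1 + (Complex.exp c - 1) • A := by
  have hpow : ∀ k : ℕ, A ^ (k + 1) = A := by
    intro k; induction k with
    | zero => simp
    | succ k ih => rw [pow_succ, ih, h]
  rw [NormedSpace.exp_eq_tsum ℂ]
  have hsum : Summable fun n : ℕ => ((n.factorial : ℂ))⁻¹ • (c • A) ^ n :=
    NormedSpace.expSeries_summable' (c • A)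
  show (∑' n : ℕ, ((n.factorial : ℂ))⁻¹ • (c • A) ^ n) = _
  rw [Summable.tsum_eq_zero_add hsum]
  have hterm : ∀ n : ℕ, (((n+1).factorial : ℂ)⁻¹) • (c • A) ^ (n+1)
      = ((((n+1).factorial : ℂ)⁻¹) * c ^ (n+1)) • A := by
    intro n
    rw [smul_pow, hpow, smul_smul]
  simp only [pow_zero, Nat.factorial_zero, Nat.cast_one, inv_one, one_smul]
  congr 1
  simp_rw [hterm]
  have hc : Summable fun n : ℕ => ((n.factorial : ℂ)⁻¹) * c ^ n := by
    simpa [smul_eq_mul] using NormedSpace.expSeries_summable' (𝕂 := ℂ) c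
  have hc' : Summable fun n : ℕ => (((n+1).factorial : ℂ)⁻¹) * c ^ (n+1) :=
    hc.comp_injective (add_left_injective 1)
  rw [Summable.tsum_smul_const hc']
  congr 1
  have : Complex.exp c = ∑' n : ℕ, ((n.factorial : ℂ)⁻¹) * c ^ n := by
    rw [Complex.exp_eq_exp_ℂ, NormedSpace.exp_eq_tsum ℂ]
    simp [smul_eq_mul]
  rw [this, Summable.tsum_eq_zero_add hc]
  simp

lemma Matrix.exp_smul_idem {m : Type*} [Fintype m] [DecidableEq m]
    (A : Matrix m m ℂ) (h : A * A = A) (c : ℂ) :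
    NormedSpace.exp (c • A) = 1 + (Complex.exp c - 1) • A := by
  letI : SeminormedRing (Matrix m m ℂ) := Matrix.linftyOpSemiNormedRing
  letI : NormedRing (Matrix m m ℂ) := Matrix.linftyOpNormedRing
  letI : NormedAlgebra ℂ (Matrix m m ℂ) := Matrix.linftyOpNormedAlgebra
  exact _root_.exp_smul_idem A h c

lemma Matrix.exp_sum_eq_one {m : Type*} [Fintype m] [DecidableEq m] {ι : Type*}
    (s : Finset ι) (f : ι → Matrix m m ℂ)
    (hcomm : ∀ i ∈ s, ∀ j ∈ s, Commute (f i) (f j))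
    (h1 : ∀ i ∈ s, NormedSpace.exp (f i) = 1) :
    NormedSpace.exp (∑ i ∈ s, f i) = 1 := by
  classical
  induction s using Finset.cons_induction with
  | empty => simpa using NormedSpace.exp_zero (𝔸 := Matrix m m ℂ)
  | cons a s ha ih =>
    rw [Finset.sum_cons]
    rw [Matrix.exp_add_of_commute]
    · rw [h1 a (Finset.mem_cons_self a s), ih
        (fun i hi j hj => hcomm i (Finset.mem_cons_of_mem hi) j (Finset.mem_cons_of_mem hj))
        (fun i hi => h1 i (Finset.mem_cons_of_mem hi)), one_mul]
    · exact Commute.sum_right _ _ _ fun j hj =>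
        hcomm a (Finset.mem_cons_self a s) j (Finset.mem_cons_of_mem hj)

section decomp
variable {d : ℕ} (n : Fin d → ℕ)

/-- rank-one projection J/n on factor i -/
noncomputable def Pm (i : Fin d) : Matrix (Fin (n i)) (Fin (n i)) ℂ :=
  Matrix.of fun _ _ => ((n i : ℂ))⁻¹

noncomputable def QQ (T : Finset (Fin d)) : Matrix (∀ i, Fin (n i)) (∀ i, Fin (n i)) ℂ :=
  Matrix.of fun u v => ∏ i, (if i ∈ T then Pm n i else 1) (u i) (v i)

lemma Pm_mul_Pm (hn : ∀ i, 3 ≤ n i) (i : Fin d) : Pm n i * Pm n i = Pm n i := by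
  have h0 : (n i : ℂ) ≠ 0 := Nat.cast_ne_zero.mpr (by have := hn i; omega)
  ext a b
  simp only [Pm, Matrix.mul_apply, Matrix.of_apply, Finset.sum_const, Finset.card_univ,
    Fintype.card_fin, nsmul_eq_mul]
  field_simp
end decomp

end BASE

lemma A2_mul_A2 : A2 * A2 = 1 := by
  ext i j
  rw [Matrix.mul_apply, show (Finset.univ : Finset (ZMod 2)) = {0, 1} by decide]
  rcases (show ∀ z : ZMod 2, z = 0 ∨ z = 1 by decide) i with rfl | rfl <;>
  rcases (show ∀ z : ZMod 2, z = 0 ∨ z = 1 by decide) j with rfl | rfl <;>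
    simp [A2, Matrix.one_apply, Finset.sum_insert, Finset.mem_singleton]

lemma cube_eq_pk {r : ℕ} (y : Fin r → ZMod 2) :
    cube y = pk (fun j => if y j = 1 then A2 else 1) := rfl

lemma cube_mul_self {r : ℕ} (y : Fin r → ZMod 2) : cube y * cube y = 1 := by
  rw [cube_eq_pk, pk_mul]
  have : (fun j => (if y j = 1 then A2 else 1) * (if y j = 1 then A2 else 1))
      = fun j : Fin r => (1 : Matrix (ZMod 2) (ZMod 2) ℂ) := by
    funext j
    by_cases h : y j = 1 <;> simp [h, A2_mul_A2]
  rw [this, pk_one]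


section decomp2
variable {d : ℕ} (n : Fin d → ℕ) (hn : ∀ i, 3 ≤ n i)

lemma QQ_eq_pk (T : Finset (Fin d)) : QQ n T = pk (fun i => if i ∈ T then Pm n i else 1) := rfl

include hn in
lemma QQ_mul (T T' : Finset (Fin d)) : QQ n T * QQ n T' = QQ n (T ∪ T') := by
  rw [QQ_eq_pk, QQ_eq_pk, pk_mul, QQ_eq_pk]
  have hfun : (fun i => (if i ∈ T then Pm n i else 1) * (if i ∈ T' then Pm n i else 1))
      = (fun i => if i ∈ T ∪ T' then Pm n i else 1) := by
    funext i
    by_cases h : i ∈ T <;> by_cases h' : i ∈ T' <;>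
      simp [h, h', Finset.mem_union, Pm_mul_Pm n hn i]
  rw [hfun]

lemma QQ_empty : QQ n (∅ : Finset (Fin d)) = 1 := by
  rw [QQ_eq_pk]
  simpa using pk_one (κ := fun i => Fin (n i))

/-- coefficient -/
noncomputable def cT (S T : Finset (Fin d)) : ℂ :=
  (-1 : ℂ) ^ (S \ T).card * ∏ i ∈ T, (n i : ℂ)

include hn in
lemma compKron_decomp (a : Fin d → ZMod 2) :
    compKron n a = ∑ T ∈ (univ.filter fun i => a i = 1).powerset,
      cT n (univ.filter fun i => a i = 1) T • QQ n T := by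
  classical
  set S := univ.filter fun i => a i = 1 with hS
  ext u v
  simp only [compKron, kronC, Matrix.of_apply, Matrix.sum_apply, Matrix.smul_apply, QQ,
    smul_eq_mul]
  rw [← Finset.prod_filter_mul_prod_filter_not univ (fun i => a i = 1)]
  have hleft : ∏ i ∈ S, (if a i = 1 then Kadj (n i) else 1) (u i) (v i)
      = ∏ i ∈ S, ((n i : ℂ) * Pm n i (u i) (v i)
          + (-(1 : Matrix (Fin (n i)) (Fin (n i)) ℂ) (u i) (v i))) := by
    apply Finset.prod_congr rfl
    intro i hi
    rw [hS, Finset.mem_filter] at hi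
    have h0 : (n i : ℂ) ≠ 0 := Nat.cast_ne_zero.mpr (by have := hn i; omega)
    simp only [hi.2, if_true, Kadj, Pm, Matrix.of_apply, Matrix.one_apply, Matrix.neg_apply]
    by_cases h : u i = v i <;> simp [h] <;> field_simp <;> norm_num
  have hright : ∏ i ∈ univ.filter (fun i => ¬ a i = 1),
        (if a i = 1 then Kadj (n i) else 1) (u i) (v i)
      = ∏ i ∈ univ.filter (fun i => ¬ a i = 1),
        (1 : Matrix (Fin (n i)) (Fin (n i)) ℂ) (u i) (v i) := by
    apply Finset.prod_congr rfl
    intro i hi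
    simp [(Finset.mem_filter.mp hi).2]
  rw [hleft, hright, Finset.prod_add, Finset.sum_mul]
  apply Finset.sum_congr rfl
  intro T hT
  rw [Finset.mem_powerset] at hT
  rw [Finset.prod_mul_distrib]
  have hneg : ∏ i ∈ S \ T, (-(1 : Matrix (Fin (n i)) (Fin (n i)) ℂ) (u i) (v i))
      = (-1 : ℂ) ^ (S \ T).card
        * ∏ i ∈ S \ T, (1 : Matrix (Fin (n i)) (Fin (n i)) ℂ) (u i) (v i) := by
    rw [← Finset.prod_const (b := (-1 : ℂ)) , ← Finset.prod_mul_distrib]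
    apply Finset.prod_congr rfl
    intro i _
    simp [Matrix.neg_apply]
  rw [hneg, cT]
  have hTc : univ.filter (fun i => ¬ i ∈ T) = (S \ T) ∪ univ.filter (fun i => ¬ a i = 1) := by
    ext i
    simp only [Finset.mem_filter, Finset.mem_univ, true_and, Finset.mem_union, Finset.mem_sdiff,
      hS]
    have hTS : ∀ j, j ∈ T → a j = 1 := by
      intro j hj; have := hT hj; rw [hS, Finset.mem_filter] at this; exact this.2
    by_cases h : a i = 1 <;> by_cases h' : i ∈ T
    · simp [h, h']
    · simp [h, h']
    · exact absurd (hTS i h') h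
    · simp [h, h']
  have hdisj : Disjoint (S \ T) (univ.filter (fun i => ¬ a i = 1)) := by
    rw [Finset.disjoint_left]
    intro i hi hi'
    rw [Finset.mem_sdiff, hS, Finset.mem_filter] at hi
    rw [Finset.mem_filter] at hi'
    exact hi'.2 hi.1.2
  have hsplit : ∏ i, (if i ∈ T then Pm n i else 1) (u i) (v i)
      = (∏ i ∈ T, Pm n i (u i) (v i)) *
        ((∏ i ∈ S \ T, (1 : Matrix (Fin (n i)) (Fin (n i)) ℂ) (u i) (v i)) *
         ∏ i ∈ univ.filter (fun i => ¬ a i = 1),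
            (1 : Matrix (Fin (n i)) (Fin (n i)) ℂ) (u i) (v i)) := by
    rw [← Finset.prod_union hdisj, ← hTc,
      ← Finset.prod_filter_mul_prod_filter_not univ (fun i => i ∈ T)]
    congr 1
    · rw [Finset.filter_mem_eq_inter, Finset.univ_inter]
      apply Finset.prod_congr rfl
      intro i hi; simp [hi]
    · apply Finset.prod_congr rfl
      intro i hi
      simp [(Finset.mem_filter.mp hi).2]
  rw [hsplit]
  ring
end decomp2

open Kronecker
section expkron
variable {m1 m2 : Type*} [Fintype m1] [DecidableEq m1] [Fintype m2] [DecidableEq m2]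

lemma exp_smul_kron (P : Matrix m1 m1 ℂ) (hP : P * P = P)
    (M Q : Matrix m2 m2 ℂ) (hQ : Q * Q = Q) (hM : M = 1 - (2 : ℂ) • Q) (c : ℂ) :
    NormedSpace.exp (c • (P ⊗ₖ M)) =
      (1 + (Complex.exp c - 1) • (P ⊗ₖ (1 : Matrix m2 m2 ℂ)))
        * (1 + (Complex.exp (-2 * c) - 1) • (P ⊗ₖ Q)) := by
  have hsplit : c • (P ⊗ₖ M)
      = c • (P ⊗ₖ (1 : Matrix m2 m2 ℂ)) + (-2 * c) • (P ⊗ₖ Q) := by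
    ext p q
    simp only [Matrix.smul_apply, Matrix.add_apply, Matrix.kroneckerMap_apply, hM,
      Matrix.sub_apply, Matrix.smul_apply, smul_eq_mul]
    ring
  have hRR : (P ⊗ₖ (1 : Matrix m2 m2 ℂ)) * (P ⊗ₖ (1 : Matrix m2 m2 ℂ))
      = P ⊗ₖ (1 : Matrix m2 m2 ℂ) := by
    rw [← Matrix.mul_kronecker_mul, hP, one_mul]
  have hR'R' : (P ⊗ₖ Q) * (P ⊗ₖ Q) = P ⊗ₖ Q := by
    rw [← Matrix.mul_kronecker_mul, hP, hQ]
  have hcomm : Commute (c • (P ⊗ₖ (1 : Matrix m2 m2 ℂ))) ((-2 * c) • (P ⊗ₖ Q)) := by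
    apply Commute.smul_left
    apply Commute.smul_right
    unfold Commute SemiconjBy
    rw [← Matrix.mul_kronecker_mul, ← Matrix.mul_kronecker_mul, hP, one_mul, mul_one]
  rw [hsplit, Matrix.exp_add_of_commute _ _ hcomm,
    Matrix.exp_smul_idem _ hRR, Matrix.exp_smul_idem _ hR'R']
end expkron


end AUX

/-- for nonzero `a ∈ (ℤ/2)^d`, nonzero `y ∈ (ℤ/2)^r`, `n_i ≥ 3` with
`4 ∣ gcd(n_1,…,n_d)`, `exp(-i(π/2)(M_a ⊗ M_y)) = (-1)^{w(a)-1}·i·(I ⊗ M_y)`; in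
particular perfect state transfer occurs at time `π/2`. -/
theorem stmt11 (d r : ℕ) (hd : 0 < d) (n : Fin d → ℕ) (hn : ∀ i, 3 ≤ n i)
    (h4 : 4 ∣ Finset.univ.gcd n)
    (a : Fin d → ZMod 2) (ha : a ≠ 0) (y : Fin r → ZMod 2) (hy : y ≠ 0) :
    NormedSpace.exp ((-Complex.I * ((Real.pi / 2 : ℝ) : ℂ)) •
        ((compKron n a) ⊗ₖ (cube y))) =
      ((-1 : ℂ) ^ (wt a - 1) * Complex.I) •
        ((1 : Matrix (∀ i, Fin (n i)) (∀ i, Fin (n i)) ℂ) ⊗ₖ cube y) ∧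
    ∀ (x : ∀ i, Fin (n i)) (u : Fin r → ZMod 2),
      (x, u) ≠ (x, u + y) ∧
      ‖((NormedSpace.exp ((-Complex.I * ((Real.pi / 2 : ℝ) : ℂ)) •
        ((compKron n a) ⊗ₖ (cube y)))) (x, u) (x, u + y))‖ = 1 := by
  classical
  set S : Finset (Fin d) := Finset.univ.filter fun i => a i = 1 with hS
  set c0 : ℂ := -Complex.I * ((Real.pi / 2 : ℝ) : ℂ) with hc0
  -- Q_y and its properties
  set Qy : Matrix (Fin r → ZMod 2) (Fin r → ZMod 2) ℂ := (2 : ℂ)⁻¹ • (1 - cube y) with hQy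
  have hcube : cube y = 1 - (2 : ℂ) • Qy := by
    rw [hQy, smul_smul]
    norm_num
  have hQyidem : Qy * Qy = Qy := by
    have h2 : (1 - cube y) * (1 - cube y) = (2 : ℂ) • (1 - cube y) := by
      rw [sub_mul, mul_sub, mul_sub, one_mul, mul_one, cube_mul_self]
      ext p q
      simp only [Matrix.sub_apply, Matrix.smul_apply, Matrix.one_apply, smul_eq_mul, one_mul, mul_one]
      ring
    show ((2 : ℂ)⁻¹ • (1 - cube y)) * ((2 : ℂ)⁻¹ • (1 - cube y)) = (2 : ℂ)⁻¹ • (1 - cube y)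
    rw [Matrix.smul_mul, Matrix.mul_smul, h2, smul_smul, smul_smul]
    norm_num
  -- commuting family
  have hXcomm : ∀ T T' : Finset (Fin d),
      Commute (QQ n T ⊗ₖ cube y) (QQ n T' ⊗ₖ cube y) := by
    intro T T'
    unfold Commute SemiconjBy
    rw [← Matrix.mul_kronecker_mul, ← Matrix.mul_kronecker_mul, QQ_mul n hn, QQ_mul n hn,
      Finset.union_comm]
  -- 4 divides each n i
  have h4n : ∀ i, 4 ∣ n i := fun i => h4.trans (Finset.gcd_dvd (Finset.mem_univ i))
  -- main exponential computation
  have hdec := compKron_decomp n hn a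
  rw [← hS] at hdec
  have hBsum : c0 • (compKron n a ⊗ₖ cube y)
      = ∑ T ∈ S.powerset, (c0 * cT n S T) • (QQ n T ⊗ₖ cube y) := by
    rw [hdec]
    ext p q
    simp only [Matrix.smul_apply, Matrix.sum_apply, Matrix.kroneckerMap_apply, smul_eq_mul,
      Finset.sum_mul, Finset.mul_sum]
    apply Finset.sum_congr rfl
    intro T _
    ring
  have hmem : ∅ ∈ S.powerset := Finset.mem_powerset.mpr (Finset.empty_subset S)
  have hsplit := (Finset.add_sum_erase S.powerset
    (fun T => (c0 * cT n S T) • (QQ n T ⊗ₖ cube y)) hmem).symm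
  -- exp of the nonempty part is 1
  have hrest : NormedSpace.exp (∑ T ∈ S.powerset.erase ∅,
      (c0 * cT n S T) • (QQ n T ⊗ₖ cube y)) = 1 := by
    apply Matrix.exp_sum_eq_one
    · intro T _ T' _
      exact ((hXcomm T T').smul_left _).smul_right _
    · intro T hT
      have hTne : T ≠ ∅ := (Finset.mem_erase.mp hT).1
      have hTS : T ⊆ S := Finset.mem_powerset.mp (Finset.mem_erase.mp hT).2
      obtain ⟨i0, hi0⟩ := Finset.nonempty_iff_ne_empty.mpr hTne
      have hdvd : 4 ∣ ∏ i ∈ T, n i := (h4n i0).trans (Finset.dvd_prod_of_mem n hi0)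
      obtain ⟨m, hm⟩ := hdvd
      set k := (S \ T).card with hk
      have hc : c0 * cT n S T = ((-(-1) ^ k * m : ℤ) : ℂ) * (2 * Real.pi * Complex.I) := by
        rw [hc0, cT, ← hk]
        have : (∏ i ∈ T, (n i : ℂ)) = ((∏ i ∈ T, n i : ℕ) : ℂ) := by
          rw [Nat.cast_prod]
        rw [this, hm]
        push_cast
        ring
      have hc2 : -2 * (c0 * cT n S T) = ((-2 * (-(-1) ^ k * m) : ℤ) : ℂ)
          * (2 * Real.pi * Complex.I) := by
        rw [hc]
        push_cast
        ring
      rw [exp_smul_kron (QQ n T) (by rw [QQ_mul n hn, Finset.union_self])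
        (cube y) Qy hQyidem hcube, hc2, hc, Complex.exp_int_mul_two_pi_mul_I,
        Complex.exp_int_mul_two_pi_mul_I]
      simp
  -- weight facts
  have hwt : wt a = S.card := rfl
  have hw1 : 1 ≤ wt a := by
    rw [hwt]
    rcases Function.ne_iff.mp ha with ⟨i, hi⟩
    have : a i = 1 := by
      have h01 : ∀ z : ZMod 2, z = 0 ∨ z = 1 := by decide
      rcases h01 (a i) with h | h
      · exact absurd h hi
      · exact h
    have : i ∈ S := by rw [hS]; simp [this]
    exact Finset.card_pos.mpr ⟨i, this⟩
  -- the empty term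
  have hcT0 : cT n S ∅ = (-1 : ℂ) ^ wt a := by
    rw [cT, hwt]
    simp
  have hexp0 : NormedSpace.exp ((c0 * cT n S ∅) • (QQ n (∅ : Finset (Fin d)) ⊗ₖ cube y))
      = ((-1 : ℂ) ^ (wt a - 1) * Complex.I) •
        ((1 : Matrix (∀ i, Fin (n i)) (∀ i, Fin (n i)) ℂ) ⊗ₖ cube y) := by
    rw [QQ_empty, exp_smul_kron (1 : Matrix (∀ i, Fin (n i)) (∀ i, Fin (n i)) ℂ)
      (one_mul 1) (cube y) Qy hQyidem hcube]
    have habs1 : Complex.exp (c0 * cT n S ∅) = (-1 : ℂ) ^ (wt a - 1) * Complex.I := by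
      rw [hcT0, hc0]
      rcases Nat.even_or_odd (wt a) with hpar | hpar
      · rw [hpar.neg_one_pow]
        have : (wt a - 1) % 2 = 1 := by
          rcases hpar with ⟨t, ht⟩
          omega
        rw [Odd.neg_one_pow (Nat.odd_iff.mpr this)]
        rw [mul_one]
        have : -Complex.I * ((Real.pi / 2 : ℝ) : ℂ) = ((-(Real.pi/2) : ℝ) : ℂ) * Complex.I := by
          push_cast; ring
        rw [this, Complex.exp_mul_I]
        push_cast
        simp [Complex.cos_pi_div_two, Complex.sin_pi_div_two]
      · rw [hpar.neg_one_pow]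
        have : (wt a - 1) % 2 = 0 := by
          rcases hpar with ⟨t, ht⟩
          omega
        rw [Even.neg_one_pow (Nat.even_iff.mpr this), one_mul]
        have : -Complex.I * ((Real.pi / 2 : ℝ) : ℂ) * (-1) = (((Real.pi/2) : ℝ) : ℂ) * Complex.I := by
          push_cast; ring
        rw [this, Complex.exp_mul_I]
        simp [Complex.cos_pi_div_two, Complex.sin_pi_div_two]
    have habs2 : Complex.exp (-2 * (c0 * cT n S ∅)) = -1 := by
      rw [hcT0, hc0]
      rcases Nat.even_or_odd (wt a) with hpar | hpar
      · rw [hpar.neg_one_pow, mul_one]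
        have : -2 * (-Complex.I * ((Real.pi / 2 : ℝ) : ℂ)) = ((Real.pi : ℝ) : ℂ) * Complex.I := by
          push_cast; ring
        rw [this, Complex.exp_mul_I]
        simp [Complex.cos_pi, Complex.sin_pi]
      · rw [hpar.neg_one_pow]
        have : -2 * (-Complex.I * ((Real.pi / 2 : ℝ) : ℂ) * (-1)) = ((-Real.pi : ℝ) : ℂ) * Complex.I := by
          push_cast; ring
        rw [this, Complex.exp_mul_I]
        push_cast
        simp [Complex.cos_pi, Complex.sin_pi]
    rw [habs1, habs2, Matrix.one_kronecker_one]
    have h1 : (1 : Matrix ((∀ i, Fin (n i)) × (Fin r → ZMod 2)) ((∀ i, Fin (n i)) × (Fin r → ZMod 2)) ℂ)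
        + ((-1 : ℂ) ^ (wt a - 1) * Complex.I - 1) • 1
        = ((-1 : ℂ) ^ (wt a - 1) * Complex.I) • 1 := by
      nth_rewrite 1 [← one_smul ℂ (1 : Matrix ((∀ i, Fin (n i)) × (Fin r → ZMod 2)) ((∀ i, Fin (n i)) × (Fin r → ZMod 2)) ℂ)]
      rw [← add_smul]
      ring_nf
    have h2 : (1 : Matrix ((∀ i, Fin (n i)) × (Fin r → ZMod 2)) ((∀ i, Fin (n i)) × (Fin r → ZMod 2)) ℂ)
        + (-1 - 1 : ℂ) • ((1 : Matrix (∀ i, Fin (n i)) (∀ i, Fin (n i)) ℂ) ⊗ₖ Qy)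
        = (1 : Matrix (∀ i, Fin (n i)) (∀ i, Fin (n i)) ℂ) ⊗ₖ cube y := by
      rw [hcube]
      ext ⟨p1, p2⟩ ⟨q1, q2⟩
      simp only [Matrix.add_apply, Matrix.smul_apply, Matrix.kroneckerMap_apply,
        Matrix.sub_apply, Matrix.one_apply, Prod.mk.injEq, smul_eq_mul]
      by_cases e1 : p1 = q1 <;> by_cases e2 : p2 = q2 <;> simp [e1, e2] <;> ring
    rw [h1, h2, Matrix.smul_mul, one_mul]
  -- split the sum and conclude the first conjunct
  have hcommsum : Commute ((c0 * cT n S ∅) • (QQ n (∅ : Finset (Fin d)) ⊗ₖ cube y))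
      (∑ T ∈ S.powerset.erase ∅, (c0 * cT n S T) • (QQ n T ⊗ₖ cube y)) :=
    Commute.sum_right _ _ _ fun T _ => ((hXcomm ∅ T).smul_left _).smul_right _
  have hmain : NormedSpace.exp (c0 • (compKron n a ⊗ₖ cube y))
      = ((-1 : ℂ) ^ (wt a - 1) * Complex.I) •
        ((1 : Matrix (∀ i, Fin (n i)) (∀ i, Fin (n i)) ℂ) ⊗ₖ cube y) := by
    rw [hBsum, hsplit, Matrix.exp_add_of_commute _ _ hcommsum, hrest, mul_one, hexp0]
  refine ⟨hmain, ?_⟩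
  intro x u
  constructor
  · intro h
    have h2 : u = u + y := congrArg Prod.snd h
    exact hy (left_eq_add.mp h2)
  · rw [hmain]
    have hcub1 : cube y u (u + y) = 1 := by
      show (∏ j, (if y j = 1 then A2 else 1) (u j) ((u + y) j)) = 1
      apply Finset.prod_eq_one
      intro j _
      have h01 : ∀ z : ZMod 2, z = 0 ∨ z = 1 := by decide
      rcases h01 (y j) with h | h
      · simp [h, Pi.add_apply, Matrix.one_apply]
      · have : u j ≠ u j + y j := by
          rw [h]
          intro hc
          exact one_ne_zero (left_eq_add.mp hc)
        simp [h, A2, Pi.add_apply, this]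
    rw [Matrix.smul_apply, Matrix.kroneckerMap_apply, Matrix.one_apply_eq, hcub1]
    simp [Complex.norm_I]
end

section
/- Let 𝒜 ⊆ (ℤ/2)^r \ {0} be nonempty, and let B = Σ_{a∈𝒜} M_a with M_a = A_{K_2}^{a_1} ⊗ ⋯ ⊗ A_{K_2}^{a_r} (the adjacency matrix of the cubelike graph NEPS(K_2,…,K_2; 𝒜)). Set c = Σ_{a∈𝒜} a ∈ (ℤ/2)^r. Then exp(-i(π/2)B) = (-i)^{|𝒜|} · M_c (where M_0 = I_{2^r}). In particular: if c ≠ 0, the cubelike graph admits perfect state transfer from every vertex u to u + c at time π/2; if c = 0, it is periodic with period π/2. -/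
open Kronecker

/- ### Auxiliary lemmas -/

lemma zmod2_cases (x : ZMod 2) : x = 0 ∨ x = 1 := by revert x; decide

lemma cube_apply {r : ℕ} (a u v : Fin r → ZMod 2) :
    cube a u v = if v = u + a then 1 else 0 := by
  unfold cube
  rw [Matrix.of_apply]
  have hfac : ∀ j, (if a j = 1 then A2 else 1) (u j) (v j)
      = if v j = u j + a j then (1 : ℂ) else 0 := by
    intro j
    rcases zmod2_cases (a j) with h | h
    · rw [h]
      have : (0 : ZMod 2) ≠ 1 := by decide
      rw [if_neg this, Matrix.one_apply]
      rw [add_zero]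
      exact if_congr eq_comm rfl rfl
    · rw [h, if_pos rfl]
      have hEq : (v j = u j + 1) ↔ ¬ (u j = v j) := by
        revert u v; intro u v
        rcases zmod2_cases (u j) with h1 | h1 <;> rcases zmod2_cases (v j) with h2 | h2 <;>
          rw [h1, h2] <;> decide
      unfold A2
      rw [Matrix.of_apply]
      by_cases h3 : u j = v j
      · rw [if_pos h3, if_neg (fun hc => (hEq.mp hc) h3)]
      · rw [if_neg h3, if_pos (hEq.mpr h3)]
  rw [Finset.prod_congr rfl (fun j _ => hfac j), Finset.prod_boole]
  congr 1
  simp only [eq_iff_iff, funext_iff, Pi.add_apply, Finset.mem_univ, forall_const]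

lemma cube_mul {r : ℕ} (a b : Fin r → ZMod 2) : cube a * cube b = cube (a + b) := by
  ext u v
  simp only [Matrix.mul_apply, cube_apply, ite_mul, one_mul, zero_mul]
  rw [Finset.sum_ite_eq' Finset.univ (u + a) (fun w => if v = w + b then (1:ℂ) else 0)]
  simp [add_assoc]

lemma cube_zero {r : ℕ} : cube (0 : Fin r → ZMod 2) = 1 := by
  ext u v
  rw [cube_apply, Matrix.one_apply, add_zero]
  simp [eq_comm]

lemma cube_commute {r : ℕ} (a b : Fin r → ZMod 2) : Commute (cube a) (cube b) := by
  unfold Commute SemiconjBy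
  rw [cube_mul, cube_mul, add_comm]

lemma cube_involution {r : ℕ} (a : Fin r → ZMod 2) : cube a * cube a = 1 := by
  rw [cube_mul]
  have : a + a = 0 := by
    funext j
    rcases zmod2_cases (a j) with h | h <;> simp [h] <;> decide
  rw [this, cube_zero]

open NormedSpace in
/-- Closed form of the exponential of `(-i·π/2) • M` for an involution `M`. -/
lemma exp_smul_involution {N : Type*} [Fintype N] [DecidableEq N]
    (M : Matrix N N ℂ) (hM : M * M = 1) :
    exp ((-Complex.I * ((Real.pi / 2 : ℝ) : ℂ)) • M) = (-Complex.I) • M := by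
  set θ : ℝ := Real.pi / 2 with hθ
  set t : ℂ := -Complex.I * (θ : ℂ) with ht
  have hM2 : M ^ 2 = 1 := by rw [pow_two, hM]
  have hMeven : ∀ k : ℕ, M ^ (2 * k) = 1 := by
    intro k; rw [pow_mul, hM2, one_pow]
  have hModd : ∀ k : ℕ, M ^ (2 * k + 1) = M := by
    intro k; rw [pow_succ, hMeven, one_mul]
  have hteven : ∀ k : ℕ, t ^ (2 * k) = (-1 : ℂ) ^ k * (θ : ℂ) ^ (2 * k) := by
    intro k
    rw [ht, mul_pow, pow_mul (-Complex.I), neg_sq, Complex.I_sq, pow_mul (θ : ℂ)]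
  have hf : ∀ n : ℕ, ((Nat.factorial n : ℂ))⁻¹ • (t • M) ^ n = (t ^ n * ((Nat.factorial n : ℂ))⁻¹) • M ^ n := by
    intro n; rw [smul_pow, smul_smul, mul_comm]
  have heven : HasSum (fun k : ℕ => ((Nat.factorial (2 * k) : ℂ))⁻¹ • (t • M) ^ (2 * k))
      (Complex.cos (θ : ℂ) • (1 : Matrix N N ℂ)) := by
    have h := (Complex.hasSum_cos (θ : ℂ)).smul_const (1 : Matrix N N ℂ)
    convert h using 2 with k
    rw [hf, hMeven, hteven, div_eq_mul_inv]
  have hodd : HasSum (fun k : ℕ => ((Nat.factorial (2 * k + 1) : ℂ))⁻¹ • (t • M) ^ (2 * k + 1))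
      ((Complex.sin (θ : ℂ) * (-Complex.I)) • M) := by
    have h := ((Complex.hasSum_sin (θ : ℂ)).mul_right (-Complex.I)).smul_const M
    convert h using 2 with k
    rw [hf, hModd]
    congr 1
    rw [pow_succ, hteven, ht]
    ring
  have htot : HasSum (fun n : ℕ => ((Nat.factorial n : ℂ))⁻¹ • (t • M) ^ n)
      (Complex.cos (θ : ℂ) • (1 : Matrix N N ℂ) + (Complex.sin (θ : ℂ) * (-Complex.I)) • M) :=
    HasSum.even_add_odd heven hodd
  rw [exp_eq_tsum (𝕂 := ℂ)]
  refine htot.tsum_eq.trans ?_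
  have hcos : Complex.cos (θ : ℂ) = 0 := by
    rw [← Complex.ofReal_cos, hθ, Real.cos_pi_div_two, Complex.ofReal_zero]
  have hsin : Complex.sin (θ : ℂ) = 1 := by
    rw [← Complex.ofReal_sin, hθ, Real.sin_pi_div_two, Complex.ofReal_one]
  rw [hcos, hsin, zero_smul, one_mul, zero_add]

open NormedSpace in
lemma exp_sum_cubes {r : ℕ} (S : Finset (Fin r → ZMod 2)) :
    exp ((-Complex.I * ((Real.pi / 2 : ℝ) : ℂ)) • ∑ a ∈ S, cube a) =
      (-Complex.I) ^ S.card • cube (∑ a ∈ S, a) := by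
  classical
  induction S using Finset.induction with
  | empty => simp [cube_zero, exp_zero]
  | @insert a S h ih =>
    have hcomm : Commute ((-Complex.I * ((Real.pi / 2 : ℝ) : ℂ)) • cube a)
        ((-Complex.I * ((Real.pi / 2 : ℝ) : ℂ)) • ∑ b ∈ S, cube b) := by
      apply Commute.smul_left
      apply Commute.smul_right
      exact Commute.sum_right _ _ _ fun b _ => cube_commute a b
    rw [Finset.sum_insert h, smul_add, Matrix.exp_add_of_commute _ _ hcomm, ih,
      exp_smul_involution (cube a) (cube_involution a),
      Finset.card_insert_of_notMem h, Finset.sum_insert h]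
    rw [smul_mul_assoc, Matrix.mul_smul, cube_mul, smul_smul, pow_succ, mul_comm]

/-- for nonempty `𝒜 ⊆ (ℤ/2)^r \ {0}` with `B = Σ_{a∈𝒜} M_a` and
`c = Σ_{a∈𝒜} a`, one has `exp(-i(π/2)B) = (-i)^{|𝒜|}·M_c`. In particular, if `c ≠ 0`
the cubelike graph admits PST from `u` to `u + c` at time `π/2`, and if `c = 0` it is
periodic with period `π/2`. -/
theorem stmt14 (r : ℕ) (𝒜 : Finset (Fin r → ZMod 2)) (h1 : 𝒜.Nonempty) (h0 : 0 ∉ 𝒜) :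
    NormedSpace.exp ((-Complex.I * ((Real.pi / 2 : ℝ) : ℂ)) • ∑ a ∈ 𝒜, cube a) =
      (-Complex.I) ^ 𝒜.card • cube (∑ a ∈ 𝒜, a) ∧
    ((∑ a ∈ 𝒜, a) ≠ 0 → ∀ u : Fin r → ZMod 2,
      u ≠ u + ∑ a ∈ 𝒜, a ∧
      ‖(NormedSpace.exp ((-Complex.I * ((Real.pi / 2 : ℝ) : ℂ)) •
        ∑ a ∈ 𝒜, cube a)) u (u + ∑ a ∈ 𝒜, a)‖ = 1) ∧
    ((∑ a ∈ 𝒜, a) = 0 → ∀ u : Fin r → ZMod 2,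
      ‖(NormedSpace.exp ((-Complex.I * ((Real.pi / 2 : ℝ) : ℂ)) •
        ∑ a ∈ 𝒜, cube a)) u u‖ = 1) := by
  have hexp := exp_sum_cubes 𝒜
  have habs : ‖(-Complex.I) ^ 𝒜.card‖ = 1 := by
    rw [norm_pow, norm_neg, Complex.norm_I, one_pow]
  refine ⟨hexp, ?_, ?_⟩
  · intro hc u
    constructor
    · intro hu
      exact hc ((left_eq_add).mp hu)
    · rw [hexp, Matrix.smul_apply, cube_apply, if_pos rfl, smul_eq_mul, mul_one, habs]
  · intro hc u
    rw [hexp, hc, cube_zero, Matrix.smul_apply, Matrix.one_apply_eq, smul_eq_mul, mul_one, habs]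
end
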